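/- Let U be a 2×2 unitary matrix and η a 2×2 density matrix. Then the map ρ ↦ (U ⊗ I₂) ρ (U ⊗ I₂)ᴴ is a bijection from D^η onto D^{UηUᴴ} that maps separable matrices onto separable matrices, and it preserves Hilbert–Schmidt volume: μH^{12}(D^{UηUᴴ}) = μH^{12}(D^η) and μH^{12}(D^{UηUᴴ}_sep) = μH^{12}(D^η_sep). -/

import Mathlib

open MeasureTheory Matrix
open scoped Kronecker ComplexOrder

noncomputable instance matrixFrobenius (m n : Type*) [Fintype m] [Fintype n] :
    NormedAddCommGroup (Matrix m n ℂ) :=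
  Matrix.frobeniusNormedAddCommGroup

noncomputable instance matrixMeasurableSpace (m n : Type*) [Fintype m] [Fintype n] :
    MeasurableSpace (Matrix m n ℂ) := borel _

instance matrixBorelSpace (m n : Type*) [Fintype m] [Fintype n] :
    @BorelSpace (Matrix m n ℂ)
      (matrixFrobenius m n).toMetricSpace.toEMetricSpace.toPseudoEMetricSpace.toUniformSpace.toTopologicalSpace
      _ := ⟨by unfold matrixFrobenius; rfl⟩

/-- Partial trace over the second factor of a two-qubit matrix. -/
noncomputable def ptrace2 (ρ : Matrix (Fin 2 × Fin 2) (Fin 2 × Fin 2) ℂ) :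
    Matrix (Fin 2) (Fin 2) ℂ :=
  fun i j => ∑ k, ρ (i, k) (j, k)

/-- A density matrix: positive semidefinite of trace 1. -/
def IsDensity {n : Type*} [Fintype n] (ρ : Matrix n n ℂ) : Prop :=
  ρ.PosSemidef ∧ ρ.trace = 1

/-- Separability of a two-qubit density matrix. -/
def SeparableState (ρ : Matrix (Fin 2 × Fin 2) (Fin 2 × Fin 2) ℂ) : Prop :=
  ∃ (K : ℕ) (_ : 1 ≤ K) (w : Fin K → ℝ)
    (σ τ : Fin K → Matrix (Fin 2) (Fin 2) ℂ),
    (∀ k, 0 ≤ w k) ∧ (∑ k, w k = 1) ∧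
    (∀ k, IsDensity (σ k)) ∧ (∀ k, IsDensity (τ k)) ∧
    ρ = ∑ k, (w k : ℂ) • (σ k ⊗ₖ τ k)

/-- The conditioned state space `D^η`: two-qubit density matrices with first
marginal `η`. -/
def Dcond (η : Matrix (Fin 2) (Fin 2) ℂ) :
    Set (Matrix (Fin 2 × Fin 2) (Fin 2 × Fin 2) ℂ) :=
  {ρ | IsDensity ρ ∧ ptrace2 ρ = η}

/-! ### Auxiliary lemmas -/

lemma kron_conjTranspose {l m p q : Type*} (A : Matrix l m ℂ) (B : Matrix p q ℂ) :
    (A ⊗ₖ B)ᴴ = Aᴴ ⊗ₖ Bᴴ := by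
  ext ⟨i, j⟩ ⟨k, l⟩
  simp [Matrix.conjTranspose_apply, Matrix.kroneckerMap_apply, mul_comm]

lemma trace_conj_eq {n m : Type*} [Fintype n] [Fintype m] (A : Matrix n m ℂ) :
    ((∑ i, ∑ j, ‖A i j‖ ^ 2 : ℝ) : ℂ) = (Aᴴ * A).trace := by
  rw [Matrix.trace, Finset.sum_comm]
  push_cast
  refine Finset.sum_congr rfl fun i _ => ?_
  simp only [Matrix.diag_apply, Matrix.mul_apply, Matrix.conjTranspose_apply]
  refine Finset.sum_congr rfl fun j _ => ?_
  rw [RCLike.star_def, Complex.conj_mul']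

lemma frob_norm_conj {n : Type*} [Fintype n] [DecidableEq n]
    {V : Matrix n n ℂ} (hV : V ∈ Matrix.unitaryGroup n ℂ) (X : Matrix n n ℂ) :
    ‖V * X * Vᴴ‖ = ‖X‖ := by
  have h1 : Vᴴ * V = 1 := by
    simpa [Matrix.star_eq_conjTranspose] using hV.1
  have h2 : V * Vᴴ = 1 := by
    simpa [Matrix.star_eq_conjTranspose] using hV.2
  rw [Matrix.frobenius_norm_def, Matrix.frobenius_norm_def]
  congr 1
  have key : ((V * X * Vᴴ)ᴴ * (V * X * Vᴴ)).trace = (Xᴴ * X).trace := by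
    have : (V * X * Vᴴ)ᴴ * (V * X * Vᴴ) = V * (Xᴴ * X) * Vᴴ := by
      simp only [Matrix.conjTranspose_mul, Matrix.conjTranspose_conjTranspose]
      calc V * (Xᴴ * Vᴴ) * (V * X * Vᴴ)
          = V * Xᴴ * (Vᴴ * V) * X * Vᴴ := by noncomm_ring
        _ = V * (Xᴴ * X) * Vᴴ := by rw [h1]; noncomm_ring
    rw [this, Matrix.trace_mul_cycle, h1, Matrix.one_mul]
  have := (trace_conj_eq (V * X * Vᴴ)).trans (key.trans (trace_conj_eq X).symm)
  exact_mod_cast this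

lemma ptrace2_conj (A : Matrix (Fin 2) (Fin 2) ℂ)
    (ρ : Matrix (Fin 2 × Fin 2) (Fin 2 × Fin 2) ℂ) :
    ptrace2 ((A ⊗ₖ (1 : Matrix (Fin 2) (Fin 2) ℂ)) * ρ
      * (Aᴴ ⊗ₖ (1 : Matrix (Fin 2) (Fin 2) ℂ))) = A * ptrace2 ρ * Aᴴ := by
  ext i j
  simp only [ptrace2, Matrix.mul_apply, Matrix.kroneckerMap_apply,
    Fintype.sum_prod_type, Matrix.one_apply, Matrix.conjTranspose_apply,
    Fin.sum_univ_two]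
  fin_cases i <;> fin_cases j <;> simp <;> ring

lemma isDensity_conj {n : Type*} [Fintype n] [DecidableEq n]
    {V : Matrix n n ℂ} (hV : V ∈ Matrix.unitaryGroup n ℂ)
    {ρ : Matrix n n ℂ} (hρ : IsDensity ρ) : IsDensity (V * ρ * Vᴴ) := by
  have h1 : Vᴴ * V = 1 := by
    simpa [Matrix.star_eq_conjTranspose] using hV.1
  refine ⟨hρ.1.mul_mul_conjTranspose_same V, ?_⟩
  rw [Matrix.trace_mul_cycle, h1, Matrix.one_mul, hρ.2]

theorem local_unitary_invariance (U η : Matrix (Fin 2) (Fin 2) ℂ)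
    (hU : U ∈ Matrix.unitaryGroup (Fin 2) ℂ) (hη : IsDensity η) :
    Set.BijOn (fun ρ => (U ⊗ₖ (1 : Matrix (Fin 2) (Fin 2) ℂ)) * ρ
        * (U ⊗ₖ (1 : Matrix (Fin 2) (Fin 2) ℂ))ᴴ)
      (Dcond η) (Dcond (U * η * Uᴴ)) ∧
    (fun ρ => (U ⊗ₖ (1 : Matrix (Fin 2) (Fin 2) ℂ)) * ρ
        * (U ⊗ₖ (1 : Matrix (Fin 2) (Fin 2) ℂ))ᴴ) ''
        {ρ ∈ Dcond η | SeparableState ρ} = {ρ ∈ Dcond (U * η * Uᴴ) | SeparableState ρ} ∧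
    μH[(12 : ℝ)] (Dcond (U * η * Uᴴ)) = μH[(12 : ℝ)] (Dcond η) ∧
    μH[(12 : ℝ)] {ρ ∈ Dcond (U * η * Uᴴ) | SeparableState ρ}
      = μH[(12 : ℝ)] {ρ ∈ Dcond η | SeparableState ρ} := by
  set V : Matrix (Fin 2 × Fin 2) (Fin 2 × Fin 2) ℂ := U ⊗ₖ (1 : Matrix (Fin 2) (Fin 2) ℂ)
    with hVdef
  have hU1 : Uᴴ * U = 1 := by simpa [Matrix.star_eq_conjTranspose] using hU.1
  have hU2 : U * Uᴴ = 1 := by simpa [Matrix.star_eq_conjTranspose] using hU.2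
  have hVH : Vᴴ = Uᴴ ⊗ₖ (1 : Matrix (Fin 2) (Fin 2) ℂ) := by
    rw [hVdef, kron_conjTranspose, Matrix.conjTranspose_one]
  have hV1 : Vᴴ * V = 1 := by
    rw [hVH, hVdef, ← Matrix.mul_kronecker_mul, hU1, Matrix.one_mul,
      Matrix.one_kronecker_one]
  have hV2 : V * Vᴴ = 1 := by
    rw [hVH, hVdef, ← Matrix.mul_kronecker_mul, hU2, Matrix.one_mul,
      Matrix.one_kronecker_one]
  have hVmem : V ∈ Matrix.unitaryGroup (Fin 2 × Fin 2) ℂ := by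
    constructor <;> simp [Matrix.star_eq_conjTranspose, hV1, hV2]
  set f : Matrix (Fin 2 × Fin 2) (Fin 2 × Fin 2) ℂ → Matrix (Fin 2 × Fin 2) (Fin 2 × Fin 2) ℂ :=
    fun ρ => V * ρ * Vᴴ with hfdef
  -- forward membership
  have hfwd : ∀ ρ ∈ Dcond η, f ρ ∈ Dcond (U * η * Uᴴ) := by
    rintro ρ ⟨hρd, hρp⟩
    refine ⟨isDensity_conj hVmem hρd, ?_⟩
    rw [hfdef]; simp only [hVH, hVdef, kron_conjTranspose, Matrix.conjTranspose_one]
    rw [ptrace2_conj, hρp]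
  -- inverse map
  set g : Matrix (Fin 2 × Fin 2) (Fin 2 × Fin 2) ℂ → Matrix (Fin 2 × Fin 2) (Fin 2 × Fin 2) ℂ :=
    fun ρ => Vᴴ * ρ * V with hgdef
  have hgf : ∀ ρ, g (f ρ) = ρ := by
    intro ρ
    simp only [hgdef, hfdef]
    calc Vᴴ * (V * ρ * Vᴴ) * V = (Vᴴ * V) * ρ * (Vᴴ * V) := by noncomm_ring
      _ = ρ := by rw [hV1, Matrix.one_mul, Matrix.mul_one]
  have hfg : ∀ ρ, f (g ρ) = ρ := by
    intro ρ
    simp only [hgdef, hfdef]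
    calc V * (Vᴴ * ρ * V) * Vᴴ = (V * Vᴴ) * ρ * (V * Vᴴ) := by noncomm_ring
      _ = ρ := by rw [hV2, Matrix.one_mul, Matrix.mul_one]
  have hVHmem : Vᴴ ∈ Matrix.unitaryGroup (Fin 2 × Fin 2) ℂ := by
    constructor <;>
      simp [Matrix.star_eq_conjTranspose, hV1, hV2]
  have hbwd : ∀ ρ ∈ Dcond (U * η * Uᴴ), g ρ ∈ Dcond η := by
    rintro ρ ⟨hρd, hρp⟩
    have : IsDensity (Vᴴ * ρ * Vᴴᴴ) := isDensity_conj hVHmem hρd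
    rw [Matrix.conjTranspose_conjTranspose] at this
    refine ⟨this, ?_⟩
    have := ptrace2_conj Uᴴ ρ
    rw [Matrix.conjTranspose_conjTranspose] at this
    rw [hgdef]
    simp only [hVH, hVdef, kron_conjTranspose, Matrix.conjTranspose_one]
    rw [this, hρp]
    calc Uᴴ * (U * η * Uᴴ) * U = (Uᴴ * U) * η * (Uᴴ * U) := by noncomm_ring
      _ = η := by rw [hU1, Matrix.one_mul, Matrix.mul_one]
  have hbij : Set.BijOn f (Dcond η) (Dcond (U * η * Uᴴ)) := by
    refine ⟨hfwd, fun a _ b _ hab => ?_, fun ρ hρ => ⟨g ρ, hbwd ρ hρ, hfg ρ⟩⟩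
    have := congrArg g hab
    rwa [hgf, hgf] at this
  -- separability is transported
  have hsep_fwd : ∀ {W : Matrix (Fin 2) (Fin 2) ℂ},
      W ∈ Matrix.unitaryGroup (Fin 2) ℂ →
      ∀ {ρ : Matrix (Fin 2 × Fin 2) (Fin 2 × Fin 2) ℂ}, SeparableState ρ →
      SeparableState ((W ⊗ₖ (1 : Matrix (Fin 2) (Fin 2) ℂ)) * ρ
        * (Wᴴ ⊗ₖ (1 : Matrix (Fin 2) (Fin 2) ℂ))) := by
    rintro W hW ρ ⟨K, hK, w, σ, τ, hw0, hw1, hσ, hτ, hρ⟩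
    refine ⟨K, hK, w, fun k => W * σ k * Wᴴ, τ, hw0, hw1,
      fun k => isDensity_conj hW (hσ k), hτ, ?_⟩
    rw [hρ, Finset.mul_sum, Finset.sum_mul]
    refine Finset.sum_congr rfl fun k _ => ?_
    have hk : (W ⊗ₖ (1 : Matrix (Fin 2) (Fin 2) ℂ)) * (σ k ⊗ₖ τ k)
        * (Wᴴ ⊗ₖ (1 : Matrix (Fin 2) (Fin 2) ℂ)) = (W * σ k * Wᴴ) ⊗ₖ τ k := by
      rw [← Matrix.mul_kronecker_mul, ← Matrix.mul_kronecker_mul]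
      simp
    rw [mul_smul_comm, smul_mul_assoc, hk]
  have hsep_img : f '' {ρ ∈ Dcond η | SeparableState ρ}
      = {ρ ∈ Dcond (U * η * Uᴴ) | SeparableState ρ} := by
    ext ρ
    constructor
    · rintro ⟨x, ⟨hx1, hx2⟩, rfl⟩
      refine ⟨hfwd x hx1, ?_⟩
      have := hsep_fwd hU hx2
      simpa [hfdef, hVH, hVdef, kron_conjTranspose] using this
    · rintro ⟨hρ1, hρ2⟩
      refine ⟨g ρ, ⟨hbwd ρ hρ1, ?_⟩, hfg ρ⟩
      have hUH : Uᴴ ∈ Matrix.unitaryGroup (Fin 2) ℂ := by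
        rw [← Matrix.star_eq_conjTranspose]; exact Unitary.star_mem hU
      have := hsep_fwd hUH (show SeparableState ρ from hρ2)
      rw [Matrix.conjTranspose_conjTranspose] at this
      simpa [hgdef, hVH, hVdef, kron_conjTranspose] using this
  -- f is an isometry
  have hiso : Isometry f := by
    refine Isometry.of_dist_eq fun a b => ?_
    have hsub : f a - f b = V * (a - b) * Vᴴ := by
      simp only [hfdef]; noncomm_ring
    rw [dist_eq_norm, dist_eq_norm, hsub, frob_norm_conj hVmem]
  have himg1 : f '' Dcond η = Dcond (U * η * Uᴴ) := hbij.image_eq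
  refine ⟨hbij, hsep_img, ?_, ?_⟩
  · rw [← himg1, hiso.hausdorffMeasure_image (Or.inl (by norm_num))]
  · rw [← hsep_img, hiso.hausdorffMeasure_image (Or.inl (by norm_num))]
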